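/- Let (V, ω) be a 2n-dimensional symplectic vector space and let J₁, J₂ be two compatible positive complex structures. Then J₂ = A J₁ A⁻¹ for some A in the symplectic group Sp(V, ω); i.e., Sp(V,ω) acts transitively on the set of compatible positive complex structures. -/

import Mathlib

open Module

noncomputable def endHomJ {V : Type*} [AddCommGroup V] [Module ℝ V]
    (J : V →ₗ[ℝ] V) (hJ2 : ∀ v, J (J v) = -v) : ℂ →+* Module.End ℝ V where
  toFun c := c.re • (1 : Module.End ℝ V) + c.im • J
  map_one' := by ext v; simp
  map_zero' := by ext v; simp
  map_add' c d := by
    ext v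
    simp [add_smul]
    abel
  map_mul' c d := by
    ext v
    simp [Module.End.mul_apply, Complex.mul_re, Complex.mul_im, smul_add, smul_smul, hJ2,
      sub_smul, add_smul, smul_neg]
    abel

theorem aux19 {V : Type*} [AddCommGroup V] [Module ℝ V] [FiniteDimensional ℝ V]
    {n : ℕ} (hdim : Module.finrank ℝ V = 2 * n)
    (ω : V →ₗ[ℝ] V →ₗ[ℝ] ℝ) (halt : ∀ v, ω v v = 0)
    (J : V →ₗ[ℝ] V) (hJ2 : ∀ v, J (J v) = -v)
    (hcomp : ∀ v w, ω (J v) (J w) = ω v w)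
    (hpos : ∀ v, v ≠ 0 → 0 < ω (J v) v) :
    ∃ e : V ≃ₗ[ℝ] EuclideanSpace ℂ (Fin n),
      (∀ v, e (J v) = Complex.I • e v) ∧
      (∀ v w, ω v w = -(inner ℂ (e v) (e w) : ℂ).im) := by
  have hskew : ∀ v w, ω w v = -(ω v w) := by
    intro v w
    have h := halt (v + w)
    simp [map_add, halt] at h
    linarith
  have hsymm : ∀ v w, ω (J w) v = ω (J v) w := by
    intro v w
    calc ω (J w) v = ω (J (J w)) (J v) := (hcomp _ _).symm
    _ = ω (-w) (J v) := by rw [hJ2]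
    _ = -(ω w (J v)) := by simp
    _ = ω (J v) w := by rw [hskew (J v) w]; ring
  letI : Module ℂ V := Module.compHom V (endHomJ J hJ2)
  have smul_def : ∀ (c : ℂ) (v : V), c • v = c.re • v + c.im • J v := fun c v => rfl
  letI : IsScalarTower ℝ ℂ V := ⟨by
    intro a c v
    rw [smul_def, smul_def, smul_add, smul_smul, smul_smul]
    simp [Complex.real_smul, Complex.mul_re, Complex.mul_im]⟩
  haveI : FiniteDimensional ℂ V := Module.Finite.of_restrictScalars_finite ℝ ℂ V
  have hrank : Module.finrank ℂ V = n := by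
    have h := Module.finrank_mul_finrank ℝ ℂ V
    rw [Complex.finrank_real_complex] at h
    omega
  letI core : InnerProductSpace.Core ℂ V :=
  { inner := fun v w => ⟨ω (J v) w, -(ω v w)⟩
    conj_inner_symm := by
      intro x y
      apply Complex.ext <;> simp [hsymm, hskew x y]
    re_inner_nonneg := by
      intro x
      rcases eq_or_ne x 0 with rfl | hx
      · simp
      · exact le_of_lt (by simpa using hpos x hx)
    add_left := by
      intro x y z
      apply Complex.ext <;> simp [map_add, add_comm]
    smul_left := by
      intro x y r
      rw [smul_def]
      apply Complex.ext <;>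
        simp [map_add, map_smul, hJ2, Complex.mul_re, Complex.mul_im, hsymm] <;> ring
    definite := by
      intro x hx
      by_contra hx0
      have := hpos x hx0
      have : (⟨ω (J x) x, -(ω x x)⟩ : ℂ) ≠ 0 := by
        simp only [ne_eq, Complex.ext_iff, Complex.zero_re, Complex.zero_im]
        intro ⟨h1, _⟩
        linarith
      exact this hx }
  letI : NormedAddCommGroup V := core.toNormedAddCommGroup
  letI : InnerProductSpace ℂ V := InnerProductSpace.ofCore core.toCore
  have hinner : ∀ v w : V, (inner ℂ v w : ℂ) = ⟨ω (J v) w, -(ω v w)⟩ := fun v w => rfl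
  let f : V ≃ₗᵢ[ℂ] EuclideanSpace ℂ (Fin n) :=
    (stdOrthonormalBasis ℂ V).repr.trans
      (LinearIsometryEquiv.piLpCongrLeft 2 ℂ ℂ (finCongr hrank))
  refine ⟨f.toLinearEquiv.restrictScalars ℝ, ?_, ?_⟩
  · intro v
    have hJv : J v = (Complex.I : ℂ) • v := by rw [smul_def]; simp
    show f (J v) = Complex.I • f v
    rw [hJv, f.map_smul]
  · intro v w
    show ω v w = -(inner ℂ (f v) (f w) : ℂ).im
    rw [f.inner_map_map, hinner]
    simp

/-- The symplectic group of a `2n`-dimensional symplectic vector space `(V, ω)` acts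
transitively on the set of compatible positive complex structures: any two such `J₁, J₂`
are conjugate by a symplectic automorphism `A`, i.e. `J₂ = A J₁ A⁻¹`. -/
theorem stmt19 {V : Type*} [AddCommGroup V] [Module ℝ V] [FiniteDimensional ℝ V]
    {n : ℕ} (hdim : Module.finrank ℝ V = 2 * n)
    (ω : V →ₗ[ℝ] V →ₗ[ℝ] ℝ) (halt : ∀ v, ω v v = 0)
    (hnd : ∀ v, (∀ w, ω v w = 0) → v = 0)
    (J₁ J₂ : V →ₗ[ℝ] V)
    (hJ₁2 : ∀ v, J₁ (J₁ v) = -v) (hJ₂2 : ∀ v, J₂ (J₂ v) = -v)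
    (hcomp₁ : ∀ v w, ω (J₁ v) (J₁ w) = ω v w) (hcomp₂ : ∀ v w, ω (J₂ v) (J₂ w) = ω v w)
    (hpos₁ : ∀ v, v ≠ 0 → 0 < ω (J₁ v) v) (hpos₂ : ∀ v, v ≠ 0 → 0 < ω (J₂ v) v) :
    ∃ A : V ≃ₗ[ℝ] V, (∀ v w, ω (A v) (A w) = ω v w) ∧
      ∀ v, J₂ v = A (J₁ (A.symm v)) := by
  obtain ⟨e₁, he₁J, he₁ω⟩ := aux19 hdim ω halt J₁ hJ₁2 hcomp₁ hpos₁
  obtain ⟨e₂, he₂J, he₂ω⟩ := aux19 hdim ω halt J₂ hJ₂2 hcomp₂ hpos₂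
  refine ⟨e₁.trans e₂.symm, ?_, ?_⟩
  · intro v w
    show ω (e₂.symm (e₁ v)) (e₂.symm (e₁ w)) = ω v w
    rw [he₂ω (e₂.symm (e₁ v)) (e₂.symm (e₁ w)), e₂.apply_symm_apply, e₂.apply_symm_apply,
      ← he₁ω v w]
  · intro v
    have h2 : J₂ v = e₂.symm (Complex.I • e₂ v) := by
      rw [← he₂J v, e₂.symm_apply_apply]
    have h1 : J₁ (e₁.symm (e₂ v)) = e₁.symm (Complex.I • e₂ v) := by
      have := he₁J (e₁.symm (e₂ v))
      rw [e₁.apply_symm_apply] at this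
      rw [← this, e₁.symm_apply_apply]
    show J₂ v = e₂.symm (e₁ (J₁ (e₁.symm (e₂ v))))
    rw [h1, e₁.apply_symm_apply, h2]
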